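/- In the monoid G⁺_{m,n} = ⟨ s, t₁,…,t_m, u₁,…,u_n | [s,t₁,…,t_m], [s,u₁,…,u_n], [t_i,u_j] ⟩_mo, the element Δ = s·t₁⋯t_m·u₁⋯u_n is a fundamental element: for each generator x there exists Δ_x with Δ = x·Δ_x = Δ_x·x (with respect to a suitable permutation of the generators). -/

import Mathlib

/-- Generators of the monoid G⁺_{m,n}: s, t₁,…,t_m, u₁,…,u_n. -/
inductive GGen (m n : ℕ) : Type
  | s : GGen m n
  | t : Fin m → GGen m n
  | u : Fin n → GGen m n
deriving DecidableEq

/-- The word s·t₁⋯t_m. -/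
def wordT (m n : ℕ) : FreeMonoid (GGen m n) :=
  FreeMonoid.ofList (GGen.s :: List.ofFn (fun i : Fin m => GGen.t i))

/-- The word s·u₁⋯u_n. -/
def wordU (m n : ℕ) : FreeMonoid (GGen m n) :=
  FreeMonoid.ofList (GGen.s :: List.ofFn (fun j : Fin n => GGen.u j))

/-- The defining relations: the cyclic relations [s,t₁,…,t_m] and [s,u₁,…,u_n]
(all cyclic rotations of the corresponding words are equal) and the commutation
relations t_i·u_j = u_j·t_i. -/
inductive GRel (m n : ℕ) : FreeMonoid (GGen m n) → FreeMonoid (GGen m n) → Prop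
  | cycT (j : ℕ) : GRel m n (wordT m n)
      (FreeMonoid.ofList ((FreeMonoid.toList (wordT m n)).rotate j))
  | cycU (j : ℕ) : GRel m n (wordU m n)
      (FreeMonoid.ofList ((FreeMonoid.toList (wordU m n)).rotate j))
  | comm (i : Fin m) (j : Fin n) :
      GRel m n (FreeMonoid.of (GGen.t i) * FreeMonoid.of (GGen.u j))
               (FreeMonoid.of (GGen.u j) * FreeMonoid.of (GGen.t i))

/-- The monoid G⁺_{m,n}. -/
abbrev GMonoid (m n : ℕ) : Type := (conGen (GRel m n)).Quotient

/-- The image of a generator in G⁺_{m,n}. -/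
def gmk {m n : ℕ} (x : GGen m n) : GMonoid m n :=
  (conGen (GRel m n)).mk' (FreeMonoid.of x)

/-- The element Δ = s·t₁⋯t_m·u₁⋯u_n. -/
def gDelta (m n : ℕ) : GMonoid m n :=
  (conGen (GRel m n)).mk' (FreeMonoid.ofList
    (GGen.s :: ((List.ofFn fun i : Fin m => GGen.t i) ++ List.ofFn fun j : Fin n => GGen.u j)))

namespace Stmt18Aux

variable {m n : ℕ}

/-- Image of a word (list) in the quotient monoid. -/
def mkL (m n : ℕ) (l : List (GGen m n)) : GMonoid m n :=
  (conGen (GRel m n)).mk' (FreeMonoid.ofList l)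

lemma mkL_append (a b : List (GGen m n)) :
    mkL m n (a ++ b) = mkL m n a * mkL m n b := by
  simp [mkL, FreeMonoid.ofList_append, map_mul]

lemma gmk_eq (x : GGen m n) : gmk x = mkL m n [x] := by
  simp [gmk, mkL, FreeMonoid.ofList_singleton]

lemma mkL_cons (x : GGen m n) (l : List (GGen m n)) :
    mkL m n (x :: l) = mkL m n [x] * mkL m n l := by
  rw [← mkL_append]; rfl

lemma rel_mkL {a b : List (GGen m n)} (h : GRel m n (FreeMonoid.ofList a) (FreeMonoid.ofList b)) :
    mkL m n a = mkL m n b :=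
  (Con.eq _).mpr (ConGen.Rel.of _ _ h)

def fT (m n : ℕ) : List (GGen m n) := List.ofFn (fun i : Fin m => GGen.t i)
def fU (m n : ℕ) : List (GGen m n) := List.ofFn (fun j : Fin n => GGen.u j)

/-- Notation for the two basic lists. -/
def lT (m n : ℕ) : List (GGen m n) := GGen.s :: List.ofFn (fun i : Fin m => GGen.t i)
def lU (m n : ℕ) : List (GGen m n) := GGen.s :: List.ofFn (fun j : Fin n => GGen.u j)

lemma rotT (j : ℕ) : mkL m n ((lT m n).rotate j) = mkL m n (lT m n) := by
  refine (rel_mkL ?_).symm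
  have h := GRel.cycT (m := m) (n := n) j
  simpa [wordT, lT, FreeMonoid.toList_ofList] using h

lemma rotU (j : ℕ) : mkL m n ((lU m n).rotate j) = mkL m n (lU m n) := by
  refine (rel_mkL ?_).symm
  have h := GRel.cycU (m := m) (n := n) j
  simpa [wordU, lU, FreeMonoid.toList_ofList] using h

lemma comm_single (i : Fin m) (j : Fin n) :
    mkL m n [GGen.t i, GGen.u j] = mkL m n [GGen.u j, GGen.t i] :=
  rel_mkL (GRel.comm i j)

lemma comm_u_T (j : Fin n) (A : List (Fin m)) :
    mkL m n (A.map GGen.t ++ [GGen.u j]) = mkL m n (GGen.u j :: A.map GGen.t) := by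
  induction A with
  | nil => rfl
  | cons i A ih =>
    calc mkL m n (((i :: A).map GGen.t) ++ [GGen.u j])
        = mkL m n [GGen.t i] * mkL m n (A.map GGen.t ++ [GGen.u j]) := by
          rw [← mkL_append]; rfl
      _ = mkL m n [GGen.t i] * mkL m n (GGen.u j :: A.map GGen.t) := by rw [ih]
      _ = mkL m n [GGen.t i] * (mkL m n [GGen.u j] * mkL m n (A.map GGen.t)) := by
          rw [mkL_cons (GGen.u j) (A.map GGen.t)]
      _ = (mkL m n [GGen.t i] * mkL m n [GGen.u j]) * mkL m n (A.map GGen.t) :=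
          (mul_assoc _ _ _).symm
      _ = mkL m n [GGen.t i, GGen.u j] * mkL m n (A.map GGen.t) := by
          rw [← mkL_append]; rfl
      _ = mkL m n [GGen.u j, GGen.t i] * mkL m n (A.map GGen.t) := by rw [comm_single]
      _ = (mkL m n [GGen.u j] * mkL m n [GGen.t i]) * mkL m n (A.map GGen.t) := by
          rw [← mkL_append]; rfl
      _ = mkL m n [GGen.u j] * (mkL m n [GGen.t i] * mkL m n (A.map GGen.t)) :=
          mul_assoc _ _ _
      _ = mkL m n [GGen.u j] * mkL m n ((i :: A).map GGen.t) := by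
          rw [← mkL_cons (GGen.t i) (A.map GGen.t)]; rfl
      _ = mkL m n (GGen.u j :: (i :: A).map GGen.t) := by
          rw [← mkL_cons (GGen.u j) ((i :: A).map GGen.t)]

lemma comm_T_U (A : List (Fin m)) (B : List (Fin n)) :
    mkL m n (A.map GGen.t ++ B.map GGen.u) = mkL m n (B.map GGen.u ++ A.map GGen.t) := by
  induction B with
  | nil => simp
  | cons b B ih =>
    calc mkL m n (A.map GGen.t ++ (b :: B).map GGen.u)
        = mkL m n ((A.map GGen.t ++ [GGen.u b]) ++ B.map GGen.u) := by
          rw [List.map_cons, ← List.singleton_append, ← List.append_assoc]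
      _ = mkL m n (A.map GGen.t ++ [GGen.u b]) * mkL m n (B.map GGen.u) := mkL_append _ _
      _ = mkL m n (GGen.u b :: A.map GGen.t) * mkL m n (B.map GGen.u) := by rw [comm_u_T]
      _ = (mkL m n [GGen.u b] * mkL m n (A.map GGen.t)) * mkL m n (B.map GGen.u) := by
          rw [mkL_cons (GGen.u b) (A.map GGen.t)]
      _ = mkL m n [GGen.u b] * (mkL m n (A.map GGen.t) * mkL m n (B.map GGen.u)) :=
          mul_assoc _ _ _
      _ = mkL m n [GGen.u b] * mkL m n (A.map GGen.t ++ B.map GGen.u) := by rw [mkL_append]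
      _ = mkL m n [GGen.u b] * mkL m n (B.map GGen.u ++ A.map GGen.t) := by rw [ih]
      _ = mkL m n ((b :: B).map GGen.u ++ A.map GGen.t) := by
          rw [List.map_cons, List.cons_append,
            mkL_cons (GGen.u b) (B.map GGen.u ++ A.map GGen.t)]

/-- Head decomposition of a rotation. -/
lemma rotate_eq_cons {α : Type*} (l : List α) (k : ℕ) (hk : k < l.length) :
    l.rotate k = l[k] :: (l.rotate k).tail := by
  have hlen : (l.rotate k).length = l.length := List.length_rotate l k
  have hne : l.rotate k ≠ [] := by
    intro h
    rw [h] at hlen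
    simp at hlen
    omega
  conv_lhs => rw [← List.cons_head_tail (l := l.rotate k) hne]
  congr 1
  rw [← List.getElem_zero (by omega)]
  rw [List.getElem_rotate]
  simp [Nat.mod_eq_of_lt hk]

lemma lT_get (i : Fin m) : (lT m n)[(i : ℕ) + 1]'(by simp [lT]) = GGen.t i := by
  simp [lT]

lemma lU_get (j : Fin n) : (lU m n)[(j : ℕ) + 1]'(by simp [lU]) = GGen.u j := by
  simp [lU]

end Stmt18Aux

open Stmt18Aux

/-- Δ = s·t₁⋯t_m·u₁⋯u_n is a fundamental element of G⁺_{m,n}: there is a permutation σ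
of the generators such that for every generator x there is d with Δ = x·d = d·σ(x). -/
theorem stmt_18 (m n : ℕ) (hm : 2 ≤ m) (hn : 2 ≤ n) :
    ∃ σ : Equiv.Perm (GGen m n), ∀ x : GGen m n, ∃ d : GMonoid m n,
      gDelta m n = gmk x * d ∧ gDelta m n = d * gmk (σ x) := by
  classical
  refine ⟨Equiv.refl _, ?_⟩
  have hTmap : (List.ofFn (id : Fin m → Fin m)).map GGen.t = fT m n := by
    simp [List.map_ofFn, fT]
  have hUmap : (List.ofFn (id : Fin n → Fin n)).map GGen.u = fU m n := by
    simp [List.map_ofFn, fU]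
  have hDelta : gDelta m n = mkL m n (lT m n ++ fU m n) := rfl
  have hTU : mkL m n (fT m n ++ fU m n) = mkL m n (fU m n ++ fT m n) := by
    rw [← hTmap, ← hUmap]; exact comm_T_U _ _
  -- Δ = (s::fU m n) * fT m n as well
  have hSU : gDelta m n = mkL m n (lU m n) * mkL m n (fT m n) := by
    calc gDelta m n = mkL m n (lT m n ++ fU m n) := hDelta
      _ = mkL m n (GGen.s :: (fT m n ++ fU m n)) := rfl
      _ = mkL m n [GGen.s] * mkL m n (fT m n ++ fU m n) := mkL_cons _ _
      _ = mkL m n [GGen.s] * mkL m n (fU m n ++ fT m n) := by rw [hTU]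
      _ = mkL m n [GGen.s] * (mkL m n (fU m n) * mkL m n (fT m n)) := by rw [mkL_append]
      _ = (mkL m n [GGen.s] * mkL m n (fU m n)) * mkL m n (fT m n) := (mul_assoc _ _ _).symm
      _ = mkL m n (lU m n) * mkL m n (fT m n) := by rw [← mkL_cons]; rfl
  have hST : gDelta m n = mkL m n (lT m n) * mkL m n (fU m n) := by
    rw [hDelta, mkL_append]
  intro x
  cases x with
  | s =>
    refine ⟨mkL m n (fT m n ++ fU m n), ?_, ?_⟩
    · rw [hDelta]
      calc mkL m n (lT m n ++ fU m n) = mkL m n (GGen.s :: (fT m n ++ fU m n)) := rfl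
        _ = mkL m n [GGen.s] * mkL m n (fT m n ++ fU m n) := mkL_cons _ _
        _ = gmk GGen.s * mkL m n (fT m n ++ fU m n) := by rw [← gmk_eq]
    · show gDelta m n = mkL m n (fT m n ++ fU m n) * gmk GGen.s
      have h1 : mkL m n (fU m n ++ [GGen.s]) = mkL m n (lU m n) := by
        have h := rotU (m := m) (n := n) 1
        rwa [show (lU m n).rotate 1 = fU m n ++ [GGen.s] by
          simp [lU, fU, List.rotate_cons_succ]] at h
      calc gDelta m n = mkL m n (lU m n) * mkL m n (fT m n) := hSU
        _ = mkL m n (fU m n ++ [GGen.s]) * mkL m n (fT m n) := by rw [h1]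
        _ = (mkL m n (fU m n) * mkL m n [GGen.s]) * mkL m n (fT m n) := by rw [mkL_append]
        _ = mkL m n (fU m n) * (mkL m n [GGen.s] * mkL m n (fT m n)) := mul_assoc _ _ _
        _ = mkL m n (fU m n) * mkL m n (lT m n) := by rw [← mkL_cons]; rfl
        _ = mkL m n (fU m n) * (mkL m n (lT m n) * 1) := by rw [mul_one]
        _ = mkL m n (fU m n) * mkL m n (lT m n) * 1 := (mul_assoc _ _ _).symm
        _ = mkL m n (fU m n) * mkL m n (fT m n ++ [GGen.s]) := by
            rw [mul_one]
            congr 1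
            have h := rotT (m := m) (n := n) 1
            rw [show (lT m n).rotate 1 = fT m n ++ [GGen.s] by
              simp [lT, fT, List.rotate_cons_succ]] at h
            exact h.symm
        _ = mkL m n (fU m n) * (mkL m n (fT m n) * mkL m n [GGen.s]) := by rw [mkL_append]
        _ = (mkL m n (fU m n) * mkL m n (fT m n)) * mkL m n [GGen.s] := (mul_assoc _ _ _).symm
        _ = (mkL m n (fU m n ++ fT m n)) * mkL m n [GGen.s] := by rw [mkL_append]
        _ = (mkL m n (fT m n ++ fU m n)) * mkL m n [GGen.s] := by rw [hTU]
        _ = mkL m n (fT m n ++ fU m n) * gmk GGen.s := by rw [← gmk_eq]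
  | t i =>
    have hk : (i : ℕ) + 1 < (lT m n).length := by simp [lT]
    have hcons : (lT m n).rotate ((i : ℕ) + 1)
        = GGen.t i :: ((lT m n).rotate ((i : ℕ) + 1)).tail := by
      rw [rotate_eq_cons (lT m n) ((i : ℕ) + 1) hk]
      congr 1
      exact lT_get i
    set Rt : List (GGen m n) := ((lT m n).rotate ((i : ℕ) + 1)).tail with hRt
    refine ⟨mkL m n (Rt ++ fU m n), ?_, ?_⟩
    · calc gDelta m n = mkL m n (lT m n) * mkL m n (fU m n) := hST
        _ = mkL m n ((lT m n).rotate ((i : ℕ) + 1)) * mkL m n (fU m n) := by rw [rotT]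
        _ = mkL m n (GGen.t i :: Rt) * mkL m n (fU m n) := by rw [← hcons]
        _ = (mkL m n [GGen.t i] * mkL m n Rt) * mkL m n (fU m n) := by rw [mkL_cons]
        _ = mkL m n [GGen.t i] * (mkL m n Rt * mkL m n (fU m n)) := mul_assoc _ _ _
        _ = gmk (GGen.t i) * mkL m n (Rt ++ fU m n) := by rw [← mkL_append, ← gmk_eq]
    · show gDelta m n = mkL m n (Rt ++ fU m n) * gmk (GGen.t i)
      have hcomm : mkL m n (fU m n ++ [GGen.t i]) = mkL m n (GGen.t i :: fU m n) := by
        have h := (comm_T_U (m := m) (n := n) [i] (List.ofFn id)).symm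
        rw [hUmap] at h
        simpa using h
      have hrot1 : mkL m n (Rt ++ [GGen.t i]) = mkL m n (lT m n) := by
        have h1 : ((lT m n).rotate ((i : ℕ) + 1)).rotate 1 = Rt ++ [GGen.t i] := by
          conv_lhs => rw [hcons]
          simp [List.rotate_cons_succ]
        rw [← h1, List.rotate_rotate, rotT]
      calc gDelta m n = mkL m n (lT m n) * mkL m n (fU m n) := hST
        _ = mkL m n (Rt ++ [GGen.t i]) * mkL m n (fU m n) := by rw [hrot1]
        _ = (mkL m n Rt * mkL m n [GGen.t i]) * mkL m n (fU m n) := by rw [mkL_append]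
        _ = mkL m n Rt * (mkL m n [GGen.t i] * mkL m n (fU m n)) := mul_assoc _ _ _
        _ = mkL m n Rt * mkL m n (GGen.t i :: fU m n) := by rw [← mkL_cons]
        _ = mkL m n Rt * mkL m n (fU m n ++ [GGen.t i]) := by rw [hcomm]
        _ = mkL m n Rt * (mkL m n (fU m n) * mkL m n [GGen.t i]) := by rw [mkL_append]
        _ = (mkL m n Rt * mkL m n (fU m n)) * mkL m n [GGen.t i] := (mul_assoc _ _ _).symm
        _ = mkL m n (Rt ++ fU m n) * gmk (GGen.t i) := by rw [← mkL_append, ← gmk_eq]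
  | u j =>
    have hk : (j : ℕ) + 1 < (lU m n).length := by simp [lU]
    have hcons : (lU m n).rotate ((j : ℕ) + 1)
        = GGen.u j :: ((lU m n).rotate ((j : ℕ) + 1)).tail := by
      rw [rotate_eq_cons (lU m n) ((j : ℕ) + 1) hk]
      congr 1
      exact lU_get j
    set Ru : List (GGen m n) := ((lU m n).rotate ((j : ℕ) + 1)).tail with hRu
    refine ⟨mkL m n (Ru ++ fT m n), ?_, ?_⟩
    · calc gDelta m n = mkL m n (lU m n) * mkL m n (fT m n) := hSU
        _ = mkL m n ((lU m n).rotate ((j : ℕ) + 1)) * mkL m n (fT m n) := by rw [rotU]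
        _ = mkL m n (GGen.u j :: Ru) * mkL m n (fT m n) := by rw [← hcons]
        _ = (mkL m n [GGen.u j] * mkL m n Ru) * mkL m n (fT m n) := by rw [mkL_cons]
        _ = mkL m n [GGen.u j] * (mkL m n Ru * mkL m n (fT m n)) := mul_assoc _ _ _
        _ = gmk (GGen.u j) * mkL m n (Ru ++ fT m n) := by rw [← mkL_append, ← gmk_eq]
    · show gDelta m n = mkL m n (Ru ++ fT m n) * gmk (GGen.u j)
      have hcomm : mkL m n (fT m n ++ [GGen.u j]) = mkL m n (GGen.u j :: fT m n) := by
        have h := comm_T_U (m := m) (n := n) (List.ofFn id) [j]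
        rw [hTmap] at h
        simpa using h
      have hrot1 : mkL m n (Ru ++ [GGen.u j]) = mkL m n (lU m n) := by
        have h1 : ((lU m n).rotate ((j : ℕ) + 1)).rotate 1 = Ru ++ [GGen.u j] := by
          conv_lhs => rw [hcons]
          simp [List.rotate_cons_succ]
        rw [← h1, List.rotate_rotate, rotU]
      calc gDelta m n = mkL m n (lU m n) * mkL m n (fT m n) := hSU
        _ = mkL m n (Ru ++ [GGen.u j]) * mkL m n (fT m n) := by rw [hrot1]
        _ = (mkL m n Ru * mkL m n [GGen.u j]) * mkL m n (fT m n) := by rw [mkL_append]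
        _ = mkL m n Ru * (mkL m n [GGen.u j] * mkL m n (fT m n)) := mul_assoc _ _ _
        _ = mkL m n Ru * mkL m n (GGen.u j :: fT m n) := by rw [← mkL_cons]
        _ = mkL m n Ru * mkL m n (fT m n ++ [GGen.u j]) := by rw [hcomm]
        _ = mkL m n Ru * (mkL m n (fT m n) * mkL m n [GGen.u j]) := by rw [mkL_append]
        _ = (mkL m n Ru * mkL m n (fT m n)) * mkL m n [GGen.u j] := (mul_assoc _ _ _).symm
        _ = mkL m n (Ru ++ fT m n) * gmk (GGen.u j) := by rw [← mkL_append, ← gmk_eq]
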